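/- Let L ∈ ℝ^{m×m} be lower triangular such that for each column j, the diagonal entry l_{jj} has the largest absolute value in that column (|l_{ij}| ≤ |l_{jj}| for all i ≥ j). Then the spectral norm of L^{-1} satisfies ‖L^{-1}‖ ≤ 2^{m-1} / min_j |l_{jj}|. -/

import Mathlib

/-- The spectral norm (largest singular value) of a real matrix, as the
operator norm of the induced map between Euclidean spaces. -/
noncomputable def specNorm {n m : ℕ} (A : Matrix (Fin n) (Fin m) ℝ) : ℝ :=
  ‖LinearMap.toContinuousLinearMap (Matrix.toEuclideanLin A)‖



lemma two_geom (n : ℕ) : ∑ t ∈ Finset.range n, (2:ℝ)^t = 2^n - 1 := by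
  induction n with
  | zero => simp
  | succ n ih => rw [Finset.sum_range_succ, ih]; ring

lemma pow_sum_le {m : ℕ} (s : Finset (Fin m)) (g : Fin m → ℕ)
    (hg : Set.InjOn g s) (hlt : ∀ x ∈ s, g x < m - 1) :
    ∑ x ∈ s, (2:ℝ) ^ (g x) ≤ 2 ^ (m-1) - 1 := by
  rw [← Finset.sum_image (fun x hx y hy h => hg hx hy h)]
  have hsub : s.image g ⊆ Finset.range (m-1) := by
    intro t ht
    simp only [Finset.mem_image] at ht
    obtain ⟨x, hx, rfl⟩ := ht
    exact Finset.mem_range.mpr (hlt x hx)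
  calc ∑ t ∈ s.image g, (2:ℝ)^t ≤ ∑ t ∈ Finset.range (m-1), (2:ℝ)^t :=
        Finset.sum_le_sum_of_subset_of_nonneg hsub (fun _ _ _ => by positivity)
    _ = 2^(m-1) - 1 := two_geom _

lemma aux_rec (c : ℕ → ℝ) (hc : ∀ k, 0 ≤ c k) (N : ℕ)
    (hrec : ∀ j, j < N → c j ≤ ∑ k ∈ Finset.Ioc j N, c k) :
    ∀ n j, j < N → N - j - 1 = n → ∑ k ∈ Finset.Ioc j N, c k ≤ 2 ^ n * c N := by
  intro n
  induction n with
  | zero =>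
    intro j hj hn
    have hN : N = j + 1 := by omega
    subst hN
    rw [Nat.Ioc_succ_singleton, Finset.sum_singleton]
    simp
  | succ n ih =>
    intro j hj hn
    have hj1 : j + 1 < N := by omega
    have hins : Finset.Ioc j N = insert (j+1) (Finset.Ioc (j+1) N) := by
      rw [Finset.Ioc_insert_left hj1.le, Finset.Icc_add_one_left_eq_Ioc]
    rw [hins, Finset.sum_insert (by simp)]
    have h1 : c (j+1) ≤ ∑ k ∈ Finset.Ioc (j+1) N, c k := hrec _ hj1
    have h2 : ∑ k ∈ Finset.Ioc (j+1) N, c k ≤ 2 ^ n * c N := ih (j+1) hj1 (by omega)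
    calc c (j+1) + ∑ k ∈ Finset.Ioc (j+1) N, c k
        ≤ 2^n * c N + 2^n * c N := add_le_add (h1.trans h2) h2
      _ = 2^(n+1) * c N := by ring


lemma specNorm_le_bound {n m : ℕ} (A : Matrix (Fin n) (Fin m) ℝ) (K : ℝ) (hK : 0 ≤ K)
    (hrow : ∀ i, ∑ j, |A i j| ≤ K) (hcol : ∀ j, ∑ i, |A i j| ≤ K) :
    specNorm A ≤ K := by
  apply ContinuousLinearMap.opNorm_le_bound _ hK
  intro x
  have hfx : ∀ i, (LinearMap.toContinuousLinearMap (Matrix.toEuclideanLin A)) x i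
      = ∑ j, A i j * x j := fun i => rfl
  have key : ∀ i, (∑ j, A i j * x j)^2 ≤ (∑ j, |A i j|) * (∑ j, |A i j| * (x j)^2) := by
    intro i
    have h1 : |∑ j, A i j * x j| ≤ ∑ j, |A i j| * |x j| := by
      refine (Finset.abs_sum_le_sum_abs _ _).trans ?_
      simp [abs_mul, le_refl]
    have h2 := Finset.sum_mul_sq_le_sq_mul_sq Finset.univ
      (fun j => Real.sqrt |A i j|) (fun j => Real.sqrt |A i j| * |x j|)
    have h3 : ∀ j : Fin m, Real.sqrt |A i j| * (Real.sqrt |A i j| * |x j|)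
        = |A i j| * |x j| := by
      intro j; rw [← mul_assoc, Real.mul_self_sqrt (abs_nonneg _)]
    simp only [h3, mul_pow, Real.sq_sqrt (abs_nonneg _), sq_abs] at h2
    calc (∑ j, A i j * x j)^2 = |∑ j, A i j * x j|^2 := (sq_abs _).symm
      _ ≤ (∑ j, |A i j| * |x j|)^2 := by
          exact pow_le_pow_left₀ (abs_nonneg _) h1 2
      _ ≤ (∑ j, |A i j|) * (∑ j, |A i j| * (x j)^2) := h2
  rw [EuclideanSpace.norm_eq, EuclideanSpace.norm_eq]
  rw [show K * Real.sqrt (∑ j, ‖x j‖^2) = Real.sqrt (K^2 * ∑ j, ‖x j‖^2) by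
    rw [Real.sqrt_mul (sq_nonneg K), Real.sqrt_sq hK]]
  apply Real.sqrt_le_sqrt
  simp only [hfx, Real.norm_eq_abs, sq_abs]
  calc ∑ i, (∑ j, A i j * x j)^2
      ≤ ∑ i, (∑ j, |A i j|) * (∑ j, |A i j| * (x j)^2) :=
        Finset.sum_le_sum (fun i _ => key i)
    _ ≤ ∑ i, K * (∑ j, |A i j| * (x j)^2) := by
        refine Finset.sum_le_sum (fun i _ => ?_)
        have hnn : 0 ≤ ∑ j, |A i j| * (x j)^2 :=
          Finset.sum_nonneg (fun j _ => by positivity)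
        exact mul_le_mul_of_nonneg_right (hrow i) hnn
    _ = K * ∑ j, (∑ i, |A i j|) * (x j)^2 := by
        rw [← Finset.mul_sum, Finset.sum_comm]
        simp_rw [Finset.sum_mul]
    _ ≤ K * ∑ j, K * (x j)^2 := by
        refine mul_le_mul_of_nonneg_left (Finset.sum_le_sum fun j _ => ?_) hK
        exact mul_le_mul_of_nonneg_right (hcol j) (sq_nonneg _)
    _ = K^2 * ∑ j, (x j)^2 := by rw [← Finset.mul_sum]; ring

/-- For an invertible lower triangular matrix `L` whose diagonal entries
dominate their columns in absolute value, `‖L⁻¹‖ ≤ 2^(m-1) / min_j |l_jj|`. -/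
theorem inv_lowerTriangular_colDominant_bound {m : ℕ} (hm : 0 < m)
    (L : Matrix (Fin m) (Fin m) ℝ)
    (htri : ∀ i j : Fin m, i < j → L i j = 0)
    (hinv : IsUnit L.det)
    (hcol : ∀ i j : Fin m, j ≤ i → |L i j| ≤ |L j j|) :
    specNorm L⁻¹ ≤ 2 ^ (m - 1) / ⨅ j : Fin m, |L j j| := by
  haveI : Nonempty (Fin m) := ⟨⟨0, hm⟩⟩
  set M := L⁻¹ with hM
  -- basic facts
  have hBT : L.BlockTriangular OrderDual.toDual := fun i j h => htri i j h
  have hdet : L.det = ∏ i, L i i := Matrix.det_of_lowerTriangular L hBT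
  have hdiag : ∀ j : Fin m, L j j ≠ 0 := by
    intro j hj
    rw [hdet] at hinv
    have := hinv.ne_zero
    exact this (Finset.prod_eq_zero (Finset.mem_univ j) hj)
  have hdpos : ∀ j : Fin m, 0 < |L j j| := fun j => abs_pos.mpr (hdiag j)
  -- the infimum
  set d := ⨅ j : Fin m, |L j j| with hd
  have hdle : ∀ j, d ≤ |L j j| := fun j =>
    ciInf_le (Finite.bddBelow_range _) j
  obtain ⟨j0, hj0⟩ := Finite.exists_min (fun j : Fin m => |L j j|)
  have hd0 : 0 < d := lt_of_lt_of_le (hdpos j0) (le_ciInf hj0)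
  -- triangularity of M
  haveI : Invertible L := L.invertibleOfIsUnitDet hinv
  have htriM : ∀ i j : Fin m, i < j → M i j = 0 := fun i j h =>
    Matrix.blockTriangular_inv_of_blockTriangular hBT h
  have hML : M * L = 1 := Matrix.nonsing_inv_mul L hinv
  -- diagonal entries of M
  have hdiagM : ∀ i : Fin m, M i i * L i i = 1 := by
    intro i
    have h1 : (M * L) i i = 1 := by rw [hML]; exact Matrix.one_apply_eq i
    have h2 : ∑ k, M i k * L k i = M i i * L i i :=
      Finset.sum_eq_single i (fun k _ hk => by
        rcases lt_or_gt_of_ne hk with h | h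
        · rw [htri k i h, mul_zero]
        · rw [htriM i k h, zero_mul])
        (fun h => absurd (Finset.mem_univ i) h)
    rw [Matrix.mul_apply, h2] at h1
    exact h1
  have habsM : ∀ i : Fin m, |M i i| ≤ 1 / d := by
    intro i
    have h1 : |M i i| * |L i i| = 1 := by rw [← abs_mul, hdiagM i, abs_one]
    have h2 : |M i i| = 1 / |L i i| := eq_one_div_of_mul_eq_one_left h1
    rw [h2]
    exact one_div_le_one_div_of_le hd0 (hdle i)
  -- the recurrence
  have hrec : ∀ i j : Fin m, j < i →
      |M i j| ≤ ∑ k ∈ Finset.Ioc j i, |M i k| := by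
    intro i j hji
    have h1 : (M * L) i j = 0 := by
      rw [hML]; exact Matrix.one_apply_ne (ne_of_gt hji)
    rw [Matrix.mul_apply] at h1
    have h2 : ∑ k ∈ Finset.Icc j i, M i k * L k j = 0 := by
      rw [← h1]
      refine Finset.sum_subset (Finset.subset_univ _) (fun k _ hk => ?_)
      simp only [Finset.mem_Icc, not_and_or, not_le] at hk
      rcases hk with h | h
      · rw [htri k j h, mul_zero]
      · rw [htriM i k h, zero_mul]
    rw [Finset.Icc_eq_cons_Ioc hji.le, Finset.sum_cons] at h2
    have h3 : M i j * L j j = -∑ k ∈ Finset.Ioc j i, M i k * L k j := by linarith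
    have h4 : |M i j| * |L j j| ≤ (∑ k ∈ Finset.Ioc j i, |M i k|) * |L j j| := by
      rw [← abs_mul, h3, abs_neg]
      calc |∑ k ∈ Finset.Ioc j i, M i k * L k j|
          ≤ ∑ k ∈ Finset.Ioc j i, |M i k * L k j| := Finset.abs_sum_le_sum_abs _ _
        _ ≤ ∑ k ∈ Finset.Ioc j i, |M i k| * |L j j| := by
            refine Finset.sum_le_sum (fun k hk => ?_)
            rw [abs_mul]
            exact mul_le_mul_of_nonneg_left
              (hcol k j (Finset.mem_Ioc.mp hk).1.le) (abs_nonneg _)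
        _ = (∑ k ∈ Finset.Ioc j i, |M i k|) * |L j j| := by rw [Finset.sum_mul]
    exact le_of_mul_le_mul_right h4 (hdpos j)
  -- entrywise bound
  have hentry : ∀ i j : Fin m, j < i →
      |M i j| ≤ 2 ^ (i.val - j.val - 1) * |M i i| := by
    intro i j hji
    set c : ℕ → ℝ := fun k => if h : k < m then |M i ⟨k, h⟩| else 0 with hc
    have hcnn : ∀ k, 0 ≤ c k := by
      intro k; rw [hc]; dsimp only; split
      · exact abs_nonneg _
      · exact le_refl 0
    have hsum : ∀ a : Fin m, ∑ k ∈ Finset.Ioc a.val i.val, c k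
        = ∑ k ∈ Finset.Ioc a i, |M i k| := by
      intro a
      rw [← Fin.map_valEmbedding_Ioc, Finset.sum_map]
      refine Finset.sum_congr rfl (fun k _ => ?_)
      simp [hc, Fin.valEmbedding, k.isLt]
    have hrecN : ∀ jn, jn < i.val → c jn ≤ ∑ k ∈ Finset.Ioc jn i.val, c k := by
      intro jn hjn
      have hjm : jn < m := lt_trans hjn i.isLt
      have hcj : c jn = |M i ⟨jn, hjm⟩| := by simp [hc, hjm]
      rw [hcj]
      have := hsum ⟨jn, hjm⟩
      rw [show ((⟨jn, hjm⟩ : Fin m) : ℕ) = jn from rfl] at this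
      rw [this]
      exact hrec i ⟨jn, hjm⟩ hjn
    have hkey := aux_rec c hcnn i.val hrecN (i.val - j.val - 1) j.val hji rfl
    have hci : c i.val = |M i i| := by simp [hc, i.isLt]
    calc |M i j| = c j.val := by simp [hc, j.isLt]
      _ ≤ ∑ k ∈ Finset.Ioc j.val i.val, c k := hrecN j.val hji
      _ ≤ 2 ^ (i.val - j.val - 1) * c i.val := hkey
      _ = 2 ^ (i.val - j.val - 1) * |M i i| := by rw [hci]
  have hpow1 : (0:ℝ) ≤ 2^(m-1) - 1 := by
    have h1 : (1:ℝ) ≤ 2^(m-1) := by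
      calc (1:ℝ) = 1^(m-1) := (one_pow _).symm
        _ ≤ 2^(m-1) := by gcongr; norm_num
    linarith
  -- row sums
  have hrow : ∀ i : Fin m, ∑ j, |M i j| ≤ 2 ^ (m-1) / d := by
    intro i
    have hz : ∑ j, |M i j| = ∑ j ∈ Finset.Iic i, |M i j| := by
      refine (Finset.sum_subset (Finset.subset_univ _) (fun j _ hj => ?_)).symm
      rw [Finset.mem_Iic, not_le] at hj
      rw [htriM i j hj, abs_zero]
    rw [hz, ← Finset.Iio_insert, Finset.sum_insert (by simp)]
    have h1 : ∑ j ∈ Finset.Iio i, |M i j| ≤ (2^(m-1) - 1) * |M i i| := by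
      calc ∑ j ∈ Finset.Iio i, |M i j|
          ≤ ∑ j ∈ Finset.Iio i, 2 ^ (i.val - j.val - 1) * |M i i| :=
            Finset.sum_le_sum (fun j hj => hentry i j (Finset.mem_Iio.mp hj))
        _ = (∑ j ∈ Finset.Iio i, (2:ℝ) ^ (i.val - j.val - 1)) * |M i i| := by
            rw [Finset.sum_mul]
        _ ≤ (2^(m-1) - 1) * |M i i| := by
            refine mul_le_mul_of_nonneg_right
              (pow_sum_le _ (fun j => i.val - j.val - 1) ?_ ?_) (abs_nonneg _)
            · intro a ha b hb hab
              rw [Finset.mem_coe, Finset.mem_Iio] at ha hb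
              have ha' : a.val < i.val := ha
              have hb' : b.val < i.val := hb
              have hab' : i.val - a.val - 1 = i.val - b.val - 1 := hab
              exact Fin.ext (by omega)
            · intro x hx
              rw [Finset.mem_Iio] at hx
              have hx' : x.val < i.val := hx
              have := i.isLt
              show i.val - x.val - 1 < m - 1
              omega
    have hMii : |M i i| ≤ 1/d := habsM i
    calc |M i i| + ∑ j ∈ Finset.Iio i, |M i j|
        ≤ 1/d + (2^(m-1) - 1) * (1/d) := by
          refine add_le_add hMii (h1.trans ?_)
          exact mul_le_mul_of_nonneg_left hMii hpow1
      _ = 2^(m-1) / d := by field_simp; ring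
  -- column sums
  have hcolM : ∀ j : Fin m, ∑ i, |M i j| ≤ 2 ^ (m-1) / d := by
    intro j
    have hz : ∑ i, |M i j| = ∑ i ∈ Finset.Ici j, |M i j| := by
      refine (Finset.sum_subset (Finset.subset_univ _) (fun i _ hi => ?_)).symm
      rw [Finset.mem_Ici, not_le] at hi
      rw [htriM i j hi, abs_zero]
    rw [hz, ← Finset.Ioi_insert, Finset.sum_insert (by simp)]
    have h1 : ∑ i ∈ Finset.Ioi j, |M i j| ≤ (2^(m-1) - 1) * (1/d) := by
      calc ∑ i ∈ Finset.Ioi j, |M i j|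
          ≤ ∑ i ∈ Finset.Ioi j, 2 ^ (i.val - j.val - 1) * (1/d) := by
            refine Finset.sum_le_sum (fun i hi => ?_)
            calc |M i j| ≤ 2 ^ (i.val - j.val - 1) * |M i i| :=
                  hentry i j (Finset.mem_Ioi.mp hi)
              _ ≤ 2 ^ (i.val - j.val - 1) * (1/d) :=
                  mul_le_mul_of_nonneg_left (habsM i) (by positivity)
        _ = (∑ i ∈ Finset.Ioi j, (2:ℝ) ^ (i.val - j.val - 1)) * (1/d) := by
            rw [Finset.sum_mul]
        _ ≤ (2^(m-1) - 1) * (1/d) := by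
            refine mul_le_mul_of_nonneg_right
              (pow_sum_le _ (fun i => i.val - j.val - 1) ?_ ?_) (by positivity)
            · intro a ha b hb hab
              rw [Finset.mem_coe, Finset.mem_Ioi] at ha hb
              have ha' : j.val < a.val := ha
              have hb' : j.val < b.val := hb
              have hab' : a.val - j.val - 1 = b.val - j.val - 1 := hab
              exact Fin.ext (by omega)
            · intro x hx
              rw [Finset.mem_Ioi] at hx
              have hx' : j.val < x.val := hx
              have := x.isLt
              show x.val - j.val - 1 < m - 1
              omega
    have hMjj : |M j j| ≤ 1/d := habsM j
    calc |M j j| + ∑ i ∈ Finset.Ioi j, |M i j|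
        ≤ 1/d + (2^(m-1) - 1) * (1/d) := add_le_add hMjj h1
      _ = 2^(m-1) / d := by field_simp; ring
  exact specNorm_le_bound M (2^(m-1)/d) (by positivity) hrow hcolM
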